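/- Let ω be a weight on a locally compact group G and define ω̂(t) = limsup_{s→∞} ω(ts)/ω(s) := inf over compact K ⊆ G of sup_{s ∈ G \ K} ω(ts)/ω(s). If G is not compact, then ω̂ is submultiplicative: ω̂(t₁t₂) ≤ ω̂(t₁)ω̂(t₂) for all t₁, t₂ ∈ G. -/

import Mathlib

open scoped ENNReal

/-- submultiplicativity of ω̂(t) = limsup_{s→∞} ω(ts)/ω(s) on a locally
compact noncompact group (values taken in ℝ≥0∞). -/
theorem stmt9 {G : Type*} [Group G] [TopologicalSpace G] [IsTopologicalGroup G]
    [LocallyCompactSpace G] (hnc : ¬ CompactSpace G)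
    (ω : G → ℝ) (hcont : Continuous ω) (hpos : ∀ t, 0 < ω t)
    (hsub : ∀ s t, ω (s * t) ≤ ω s * ω t) (t₁ t₂ : G) :
    (⨅ (K : Set G) (_ : IsCompact K), ⨆ (s : G) (_ : s ∉ K),
        ENNReal.ofReal (ω (t₁ * t₂ * s) / ω s)) ≤
    (⨅ (K : Set G) (_ : IsCompact K), ⨆ (s : G) (_ : s ∉ K),
        ENNReal.ofReal (ω (t₁ * s) / ω s)) *
    (⨅ (K : Set G) (_ : IsCompact K), ⨆ (s : G) (_ : s ∉ K),
        ENNReal.ofReal (ω (t₂ * s) / ω s)) := by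
  set F : G → Set G → ℝ≥0∞ := fun t K =>
    ⨆ (s : G) (_ : s ∉ K), ENNReal.ofReal (ω (t * s) / ω s) with hF
  set A : ℝ≥0∞ := ⨅ (K : Set G) (_ : IsCompact K), ⨆ (s : G) (_ : s ∉ K),
      ENNReal.ofReal (ω (t₁ * t₂ * s) / ω s) with hA
  -- for every compact K there is a point outside K
  have hex : ∀ K : Set G, IsCompact K → ∃ s : G, s ∉ K := by
    intro K hK
    by_contra h
    push_neg at h
    exact hnc ⟨(Set.eq_univ_of_forall h) ▸ hK⟩
  -- pointwise lower bound on the quotients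
  have hquot : ∀ (t s : G), (ω t⁻¹)⁻¹ ≤ ω (t * s) / ω s := by
    intro t s
    rw [le_div_iff₀ (hpos s)]
    have h1 : ω s ≤ ω t⁻¹ * ω (t * s) := by
      have := hsub t⁻¹ (t * s)
      rwa [inv_mul_cancel_left] at this
    calc (ω t⁻¹)⁻¹ * ω s ≤ (ω t⁻¹)⁻¹ * (ω t⁻¹ * ω (t * s)) :=
          mul_le_mul_of_nonneg_left h1 (inv_nonneg.mpr (hpos _).le)
      _ = ω (t * s) := inv_mul_cancel_left₀ (hpos t⁻¹).ne' _
  -- lower bound for F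
  have hFpos : ∀ (t : G) (K : Set G), IsCompact K →
      ENNReal.ofReal ((ω t⁻¹)⁻¹) ≤ F t K := by
    intro t K hK
    obtain ⟨s, hs⟩ := hex K hK
    exact le_trans (ENNReal.ofReal_le_ofReal (hquot t s))
      (le_iSup₂ (f := fun (s : G) (_ : s ∉ K) => ENNReal.ofReal (ω (t * s) / ω s)) s hs)
  have hFne0 : ∀ (t : G) (K : Set G), IsCompact K → F t K ≠ 0 := by
    intro t K hK
    refine ((lt_of_lt_of_le ?_ (hFpos t K hK))).ne'
    rw [ENNReal.ofReal_pos]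
    exact inv_pos.mpr (hpos _)
  -- upper bound for F
  have hFle : ∀ (t : G) (K : Set G), F t K ≤ ENNReal.ofReal (ω t) := by
    intro t K
    refine iSup₂_le fun s _ => ENNReal.ofReal_le_ofReal ?_
    rw [div_le_iff₀ (hpos s)]
    exact hsub t s
  have hFtop : ∀ (t : G) (K : Set G), F t K ≠ ⊤ :=
    fun t K => ((hFle t K).trans_lt ENNReal.ofReal_lt_top).ne
  -- key estimate
  have key : ∀ (K₁ K₂ : Set G), IsCompact K₁ → IsCompact K₂ →
      A ≤ F t₁ K₁ * F t₂ K₂ := by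
    intro K₁ K₂ hK₁ hK₂
    have hKc : IsCompact (K₂ ∪ (fun x => t₂⁻¹ * x) '' K₁) :=
      hK₂.union (hK₁.image (continuous_const.mul continuous_id))
    refine le_trans (iInf₂_le _ hKc) (iSup₂_le fun s hs => ?_)
    have hs₂ : s ∉ K₂ := fun h => hs (Set.mem_union_left _ h)
    have hs₁ : t₂ * s ∉ K₁ := by
      intro h
      exact hs (Set.mem_union_right _ ⟨t₂ * s, h, by group⟩)
    have heq : ω (t₁ * t₂ * s) / ω s
        = (ω (t₁ * (t₂ * s)) / ω (t₂ * s)) * (ω (t₂ * s) / ω s) := by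
      rw [mul_assoc]
      exact (div_mul_div_cancel₀ (hpos (t₂ * s)).ne').symm
    calc ENNReal.ofReal (ω (t₁ * t₂ * s) / ω s)
        = ENNReal.ofReal (ω (t₁ * (t₂ * s)) / ω (t₂ * s)) *
          ENNReal.ofReal (ω (t₂ * s) / ω s) := by
          rw [heq, ENNReal.ofReal_mul (div_nonneg (hpos _).le (hpos _).le)]
      _ ≤ F t₁ K₁ * F t₂ K₂ :=
          mul_le_mul'
            (le_iSup₂ (f := fun (u : G) (_ : u ∉ K₁) =>
              ENNReal.ofReal (ω (t₁ * u) / ω u)) (t₂ * s) hs₁)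
            (le_iSup₂ (f := fun (u : G) (_ : u ∉ K₂) =>
              ENNReal.ofReal (ω (t₂ * u) / ω u)) s hs₂)
  -- bounds for the infima
  set I₁ : ℝ≥0∞ := ⨅ (K : Set G) (_ : IsCompact K), F t₁ K with hI₁
  set I₂ : ℝ≥0∞ := ⨅ (K : Set G) (_ : IsCompact K), F t₂ K with hI₂
  have hI2ne0 : I₂ ≠ 0 := by
    have hle : ENNReal.ofReal ((ω t₂⁻¹)⁻¹) ≤ I₂ := le_iInf₂ fun K hK => hFpos t₂ K hK
    refine (lt_of_lt_of_le ?_ hle).ne'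
    rw [ENNReal.ofReal_pos]
    exact inv_pos.mpr (hpos _)
  have hI2top : I₂ ≠ ⊤ := by
    refine ne_top_of_le_ne_top (hFtop t₂ ∅) ?_
    exact iInf₂_le ∅ isCompact_empty
  show A ≤ I₁ * I₂
  rw [← ENNReal.div_le_iff hI2ne0 hI2top]
  refine le_iInf₂ fun K₁ hK₁ => ?_
  rw [ENNReal.div_le_iff hI2ne0 hI2top, ← ENNReal.div_le_iff' (hFne0 t₁ K₁ hK₁) (hFtop t₁ K₁)]
  refine le_iInf₂ fun K₂ hK₂ => ?_
  rw [ENNReal.div_le_iff' (hFne0 t₁ K₁ hK₁) (hFtop t₁ K₁)]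
  exact key K₁ K₂ hK₁ hK₂
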